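/- Consider boosting for T rounds in the setup below, where at each round t the margin vector m^t ∈ {−1, +1}^n is arbitrary, ε_t = Σ_{i : m^t_i = −1} q^t_i satisfies 0 < ε_t < 1, and α_t = (1/2)·ln((1 − ε_t)/ε_t). Suppose for each round t there is a distribution w^t ∈ Δ_n such that, with γ_t^(w) = (1/2)·Σ_{i=1}^n w^t_i m^t_i and δ_t = √( KL(w^t ‖ q^t) / 2 ), one has γ_t^(w) > δ_t. Then the fraction of training examples misclassified by the final ensemble satisfies (1/n)·Σ_{i=1}^n 𝟙[s_{T,i} ≤ 0] ≤ exp( −2 · Σ_{t=1}^T (γ_t^(w) − δ_t)^2 ), where 𝟙[s_{T,i} ≤ 0] is 1 if the final cumulative score of example i is nonpositive and 0 otherwise. -/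

import Mathlib

/-- Cumulative score of example `i` after `t` rounds: `s_{t,i} = Σ_{s=1}^t α_s · m^s_i`. -/
noncomputable def cumScore (n : ℕ) (m : ℕ → Fin n → ℝ) (α : ℕ → ℝ) (t : ℕ) (i : Fin n) : ℝ :=
  ∑ s ∈ Finset.Icc 1 t, α s * m s i

/-- Exponential loss after `t` rounds: `L_exp(f_t) = Σ_i exp(−s_{t,i})`. -/
noncomputable def expLoss (n : ℕ) (m : ℕ → Fin n → ℝ) (α : ℕ → ℝ) (t : ℕ) : ℝ :=
  ∑ i, Real.exp (-(cumScore n m α t i))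

/-- Exponential-weights distribution at round `t`:
`q^t_i = exp(−s_{t−1,i}) / L_exp(f_{t−1})`. -/
noncomputable def expWeights (n : ℕ) (m : ℕ → Fin n → ℝ) (α : ℕ → ℝ) (t : ℕ) (i : Fin n) : ℝ :=
  Real.exp (-(cumScore n m α (t - 1) i)) / expLoss n m α (t - 1)

/-- Kullback–Leibler divergence on the finite simplex
(with the convention `0 · ln 0 = 0`, which holds automatically since `0 * x = 0`). -/
noncomputable def klDiv (n : ℕ) (p q : Fin n → ℝ) : ℝ :=
  ∑ i, p i * Real.log (p i / q i)

open Real Set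

/-- Helper: `G t = (t+1) log t - 2(t-1)` is monotone on `(0,∞)`. -/
private lemma G_mono : MonotoneOn (fun t : ℝ => (t+1) * Real.log t - 2*(t-1)) (Ioi 0) := by
  apply monotoneOn_of_hasDerivWithinAt_nonneg (f' := fun t : ℝ => Real.log t + (t+1) * t⁻¹ - 2)
    (convex_Ioi 0)
  · apply ContinuousOn.sub
    · exact (continuousOn_id.add continuousOn_const).mul
        (Real.continuousOn_log.mono (by intro x hx; exact ne_of_gt hx))
    · fun_prop
  · intro x hx
    rw [interior_Ioi] at hx
    have hx0 : (0:ℝ) < x := hx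
    have h1 : HasDerivAt (fun t : ℝ => (t+1) * Real.log t)
        (1 * Real.log x + (x+1) * x⁻¹) x := by
      exact (((hasDerivAt_id x).add_const 1)).mul (Real.hasDerivAt_log (ne_of_gt hx0))
    have h2 : HasDerivAt (fun t : ℝ => (t+1) * Real.log t - 2*(t-1))
        (1 * Real.log x + (x+1) * x⁻¹ - 2*1) x := by
      exact h1.sub (((hasDerivAt_id x).sub_const 1).const_mul 2)
    have := h2.hasDerivWithinAt (s := interior (Ioi (0:ℝ)))
    simpa [one_mul] using this
  · intro x hx
    rw [interior_Ioi] at hx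
    have hx0 : (0:ℝ) < x := hx
    have hlog : 1 - x⁻¹ ≤ Real.log x := Real.one_sub_inv_le_log_of_pos hx0
    have hinv : 0 < x⁻¹ := inv_pos.2 hx0
    have : (x+1) * x⁻¹ = 1 + x⁻¹ := by field_simp
    nlinarith

private lemma F_hasDeriv {x : ℝ} (hx : 0 < x) :
    HasDerivAt (fun t : ℝ => 2*(t+2)*(t*Real.log t - t + 1) - 3*(t-1)^2)
      (4*((x+1) * Real.log x - 2*(x-1))) x := by
  have h1 : HasDerivAt (fun t : ℝ => t * Real.log t) (Real.log x + 1) x :=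
    Real.hasDerivAt_mul_log (ne_of_gt hx)
  have h2 : HasDerivAt (fun t : ℝ => t*Real.log t - t + 1) (Real.log x + 1 - 1) x :=
    (h1.sub (hasDerivAt_id x)).add_const 1
  have h3 : HasDerivAt (fun t : ℝ => 2*(t+2)) 2 x := by
    simpa using ((hasDerivAt_id x).add_const 2).const_mul 2
  have h4 : HasDerivAt (fun t : ℝ => 2*(t+2)*(t*Real.log t - t + 1))
      (2 * (x*Real.log x - x + 1) + 2*(x+2) * (Real.log x + 1 - 1)) x := h3.mul h2
  have h5 : HasDerivAt (fun t : ℝ => 3*(t-1)^2) (3*(2*(x-1))) x := by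
    simpa using (((hasDerivAt_id x).sub_const 1).pow 2).const_mul 3
  have h6 := h4.sub h5
  exact h6.congr_deriv (by ring)

private lemma F_nonneg {x : ℝ} (hx : 0 < x) :
    0 ≤ 2*(x+2)*(x*Real.log x - x + 1) - 3*(x-1)^2 := by
  set F := fun t : ℝ => 2*(t+2)*(t*Real.log t - t + 1) - 3*(t-1)^2 with hF
  have hF1 : F 1 = 0 := by simp [hF]
  have hlogc : ContinuousOn (fun t : ℝ => t * Real.log t) (Ioi 0) :=
    continuousOn_id.mul (Real.continuousOn_log.mono (by intro y hy; exact ne_of_gt hy))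
  have hcont : ContinuousOn F (Ioi 0) := by
    exact ((continuousOn_const.mul (continuousOn_id.add continuousOn_const)).mul
      (((hlogc.sub continuousOn_id).add continuousOn_const))).sub
      (continuousOn_const.mul ((continuousOn_id.sub continuousOn_const).pow 2))
  have hGsign : ∀ y : ℝ, 0 < y → (y ≤ 1 → (y+1)*Real.log y - 2*(y-1) ≤ 0) ∧
      (1 ≤ y → 0 ≤ (y+1)*Real.log y - 2*(y-1)) := by
    intro y hy
    constructor
    · intro hy1
      have := G_mono (mem_Ioi.2 hy) (mem_Ioi.2 one_pos) hy1
      simpa using this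
    · intro hy1
      have := G_mono (mem_Ioi.2 one_pos) (mem_Ioi.2 hy) hy1
      simpa using this
  rcases le_or_gt x 1 with hx1 | hx1
  · -- F antitone on Ioc 0 1
    have hanti : AntitoneOn F (Ioc 0 1) := by
      apply antitoneOn_of_hasDerivWithinAt_nonpos (f' := fun t => 4*((t+1)*Real.log t - 2*(t-1)))
        (convex_Ioc 0 1) (hcont.mono (Ioc_subset_Ioi_self))
      · intro y hy
        rw [interior_Ioc] at hy
        exact (F_hasDeriv hy.1).hasDerivWithinAt
      · intro y hy
        rw [interior_Ioc] at hy
        have := (hGsign y hy.1).1 hy.2.le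
        linarith
    have := hanti (mem_Ioc.2 ⟨hx, hx1⟩) (mem_Ioc.2 ⟨one_pos, le_refl 1⟩) hx1
    rw [hF1] at this
    exact this
  · have hmono : MonotoneOn F (Ici 1) := by
      apply monotoneOn_of_hasDerivWithinAt_nonneg (f' := fun t => 4*((t+1)*Real.log t - 2*(t-1)))
        (convex_Ici 1) (hcont.mono (by intro y hy; exact lt_of_lt_of_le one_pos (mem_Ici.1 hy)))
      · intro y hy
        rw [interior_Ici] at hy
        exact (F_hasDeriv (lt_trans one_pos hy)).hasDerivWithinAt
      · intro y hy
        rw [interior_Ici] at hy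
        have := (hGsign y (lt_trans one_pos hy)).2 hy.le
        linarith
    have := hmono (mem_Ici.2 (le_refl 1)) (mem_Ici.2 hx1.le) hx1.le
    rw [hF1] at this
    exact this

/-- Pointwise refined Pinsker inequality. -/
private lemma pointwise_pinsker {a b : ℝ} (ha : 0 ≤ a) (hb : 0 < b) :
    3*(a-b)^2 / (2*(a+2*b)) ≤ a * Real.log (a/b) - a + b := by
  rcases eq_or_lt_of_le ha with h0 | ha'
  · rw [← h0]
    simp only [zero_mul, zero_sub, neg_add_eq_sub]
    rw [div_le_iff₀ (by nlinarith)]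
    nlinarith
  · have hF := F_nonneg (div_pos ha' hb)
    generalize hLL : Real.log (a/b) = L at hF ⊢
    have hbne : b ≠ 0 := ne_of_gt hb
    have hkey : 0 ≤ 2*(a+2*b)*(a*L - a + b) - 3*(a-b)^2 := by
      have expand : 2*(a+2*b)*(a*L - a + b) - 3*(a-b)^2
          = b^2 * (2*(a/b+2)*((a/b)*L - a/b + 1) - 3*(a/b-1)^2) := by
        field_simp
      rw [expand]
      positivity
    rw [div_le_iff₀ (by nlinarith)]
    nlinarith

/-- Pinsker's inequality on the finite simplex. -/
private lemma pinsker_fin (n : ℕ) (w q : Fin n → ℝ) (hw : ∀ i, 0 ≤ w i)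
    (hq : ∀ i, 0 < q i) (hws : ∑ i, w i = 1) (hqs : ∑ i, q i = 1) :
    (∑ i, |w i - q i|) ^ 2 ≤ 2 * klDiv n w q := by
  set c : Fin n → ℝ := fun i => 2*(w i + 2*q i)/3 with hc
  have hcpos : ∀ i, 0 < c i := fun i => by
    have := hw i; have := hq i; simp only [hc]; positivity
  have hcsum : ∑ i, c i = 2 := by
    simp only [hc]
    rw [← Finset.sum_div]
    have : ∑ i : Fin n, 2 * (w i + 2*q i) = 2 * (∑ i, w i) + 4 * (∑ i, q i) := by
      rw [Finset.mul_sum, Finset.mul_sum, ← Finset.sum_add_distrib]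
      exact Finset.sum_congr rfl (fun i _ => by ring)
    rw [this, hws, hqs]
    norm_num
  have hS : ∑ i, (w i - q i)^2 / c i ≤ klDiv n w q := by
    have hterm : ∀ i, (w i - q i)^2 / c i ≤ w i * Real.log (w i / q i) - w i + q i := by
      intro i
      have := pointwise_pinsker (hw i) (hq i)
      calc (w i - q i)^2 / c i = 3*(w i - q i)^2 / (2*(w i + 2*q i)) := by
            rw [hc]; rw [div_div_eq_mul_div, div_eq_div_iff (by have := hw i; have := hq i; positivity) (by have := hw i; have := hq i; positivity)]
            ring
        _ ≤ _ := this
    calc ∑ i, (w i - q i)^2 / c i ≤ ∑ i, (w i * Real.log (w i / q i) - w i + q i) :=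
          Finset.sum_le_sum (fun i _ => hterm i)
      _ = klDiv n w q := by
          rw [klDiv]
          have : ∑ i : Fin n, (w i * Real.log (w i / q i) - w i + q i)
              = (∑ i, w i * Real.log (w i / q i)) - (∑ i, w i) + (∑ i, q i) := by
            rw [Finset.sum_add_distrib, Finset.sum_sub_distrib]
          rw [this, hws, hqs]
          ring
  have hCS : (∑ i, |w i - q i|) ^ 2 ≤ (∑ i, (w i - q i)^2 / c i) * (∑ i, c i) := by
    have := Finset.sum_mul_sq_le_sq_mul_sq Finset.univ
      (fun i => |w i - q i| / Real.sqrt (c i)) (fun i => Real.sqrt (c i))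
    have heq1 : ∀ i : Fin n, |w i - q i| / Real.sqrt (c i) * Real.sqrt (c i) = |w i - q i| := by
      intro i
      rw [div_mul_cancel₀]
      exact ne_of_gt (Real.sqrt_pos.2 (hcpos i))
    have heq2 : ∀ i : Fin n, (|w i - q i| / Real.sqrt (c i))^2 = (w i - q i)^2 / c i := by
      intro i
      rw [div_pow, sq_abs, Real.sq_sqrt (hcpos i).le]
    have heq3 : ∀ i : Fin n, (Real.sqrt (c i))^2 = c i := fun i => Real.sq_sqrt (hcpos i).le
    calc (∑ i, |w i - q i|) ^ 2
        = (∑ i, |w i - q i| / Real.sqrt (c i) * Real.sqrt (c i)) ^ 2 := by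
          congr 1; exact Finset.sum_congr rfl (fun i _ => (heq1 i).symm)
      _ ≤ (∑ i, (|w i - q i| / Real.sqrt (c i))^2) * (∑ i, (Real.sqrt (c i))^2) := this
      _ = (∑ i, (w i - q i)^2 / c i) * (∑ i, c i) := by
          congr 1
          · exact Finset.sum_congr rfl (fun i _ => heq2 i)
          · exact Finset.sum_congr rfl (fun i _ => heq3 i)
  calc (∑ i, |w i - q i|) ^ 2 ≤ (∑ i, (w i - q i)^2 / c i) * (∑ i, c i) := hCS
    _ = 2 * ∑ i, (w i - q i)^2 / c i := by rw [hcsum]; ring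
    _ ≤ 2 * klDiv n w q := by linarith

private lemma round_factor {e g : ℝ} (he0 : 0 < e) (he1 : e < 1) (hg : 0 < g)
    (hle : g ≤ 1/2 - e) : 2 * Real.sqrt (e * (1 - e)) ≤ Real.exp (-2 * g^2) := by
  have hs4 : Real.sqrt 4 = 2 := by
    rw [show (4:ℝ) = 2^2 by norm_num]; exact Real.sqrt_sq (by norm_num)
  have h1 : 2 * Real.sqrt (e * (1 - e)) = Real.sqrt (4 * (e * (1 - e))) := by
    rw [Real.sqrt_mul (by norm_num : (0:ℝ) ≤ 4), hs4]
  have h2 : 4 * (e * (1 - e)) ≤ Real.exp (-(4 * g^2)) := by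
    have hexp : 1 - 4 * g^2 ≤ Real.exp (-(4 * g^2)) := by
      have := Real.add_one_le_exp (-(4 * g^2))
      linarith
    nlinarith
  have hsq : (Real.exp (-2 * g^2))^2 = Real.exp (-(4 * g^2)) := by
    rw [sq, ← Real.exp_add]; congr 1; ring
  have h3 : Real.sqrt (Real.exp (-(4 * g^2))) = Real.exp (-2 * g^2) := by
    rw [← hsq, Real.sqrt_sq (Real.exp_nonneg _)]
  calc 2 * Real.sqrt (e * (1 - e)) = Real.sqrt (4 * (e * (1-e))) := h1
    _ ≤ Real.sqrt (Real.exp (-(4 * g^2))) := Real.sqrt_le_sqrt h2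
    _ = Real.exp (-2 * g^2) := h3

private lemma exp_half_log {r : ℝ} (hr : 0 < r) :
    Real.exp ((1/2) * Real.log r) = Real.sqrt r := by
  have h : Real.exp ((1/2) * Real.log r) ^ 2 = r := by
    rw [sq, ← Real.exp_add, show (1/2) * Real.log r + (1/2) * Real.log r = Real.log r by ring,
      Real.exp_log hr]
  conv_rhs => rw [← h]
  rw [Real.sqrt_sq (Real.exp_nonneg _)]


/-- **Training error bound with fairness cost.**
Under the same hypotheses as the main theorem, the fraction of misclassified
training examples (those with final cumulative score `s_{T,i} ≤ 0`) is at most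
`exp(−2 · Σ_t (γ_t^(w) − δ_t)^2)`. -/
theorem fairproj_training_error_bound (n : ℕ) (hn : 1 ≤ n) (T : ℕ)
    (m : ℕ → Fin n → ℝ) (α : ℕ → ℝ) (ε : ℕ → ℝ) (w : ℕ → Fin n → ℝ)
    (γw δ : ℕ → ℝ)
    (hmargin : ∀ t ∈ Finset.Icc 1 T, ∀ i, m t i = -1 ∨ m t i = 1)
    (hε : ∀ t ∈ Finset.Icc 1 T,
      ε t = ∑ i, if m t i = -1 then expWeights n m α t i else 0)
    (hε_pos : ∀ t ∈ Finset.Icc 1 T, 0 < ε t)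
    (hε_lt : ∀ t ∈ Finset.Icc 1 T, ε t < 1)
    (hα : ∀ t ∈ Finset.Icc 1 T, α t = (1 / 2) * Real.log ((1 - ε t) / ε t))
    (hw_nonneg : ∀ t ∈ Finset.Icc 1 T, ∀ i, 0 ≤ w t i)
    (hw_sum : ∀ t ∈ Finset.Icc 1 T, ∑ i, w t i = 1)
    (hγw : ∀ t ∈ Finset.Icc 1 T, γw t = (1 / 2) * ∑ i, w t i * m t i)
    (hδ : ∀ t ∈ Finset.Icc 1 T,
      δ t = Real.sqrt (klDiv n (w t) (expWeights n m α t) / 2))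
    (hedge : ∀ t ∈ Finset.Icc 1 T, δ t < γw t) :
    (1 / n : ℝ) * ∑ i, (if cumScore n m α T i ≤ 0 then (1 : ℝ) else 0)
      ≤ Real.exp (-2 * ∑ t ∈ Finset.Icc 1 T, (γw t - δ t) ^ 2) := by
  have hn0 : (0:ℝ) < n := by exact_mod_cast hn
  have hne : Nonempty (Fin n) := ⟨⟨0, hn⟩⟩
  have hL_pos : ∀ t, 0 < expLoss n m α t := by
    intro t
    exact Finset.sum_pos (fun i _ => Real.exp_pos _) Finset.univ_nonempty
  have hq_pos : ∀ t i, 0 < expWeights n m α t i := by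
    intro t i
    exact div_pos (Real.exp_pos _) (hL_pos _)
  have hq_sum : ∀ t, ∑ i, expWeights n m α t i = 1 := by
    intro t
    simp only [expWeights]
    rw [← Finset.sum_div,
      show (∑ i, Real.exp (-(cumScore n m α (t-1) i))) = expLoss n m α (t-1) from rfl,
      div_self (ne_of_gt (hL_pos (t-1)))]
  -- sum of q-weighted margins
  have hqm : ∀ t ∈ Finset.Icc 1 T, ∑ i, expWeights n m α t i * m t i = 1 - 2 * ε t := by
    intro t ht
    have hterm : ∀ i, expWeights n m α t i * m t i
        = expWeights n m α t i - 2 * (if m t i = -1 then expWeights n m α t i else 0) := by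
      intro i
      rcases hmargin t ht i with h | h <;> rw [h] <;> norm_num <;> ring
    rw [Finset.sum_congr rfl (fun i _ => hterm i), Finset.sum_sub_distrib, hq_sum,
      ← Finset.mul_sum, ← hε t ht]
  -- edge bound: γw t - δ t ≤ 1/2 - ε t
  have hγq : ∀ t ∈ Finset.Icc 1 T, γw t - δ t ≤ 1/2 - ε t := by
    intro t ht
    set K := klDiv n (w t) (expWeights n m α t) with hK
    have hpin : (∑ i, |w t i - expWeights n m α t i|)^2 ≤ 2 * K := by
      have := pinsker_fin n (w t) (expWeights n m α t) (hw_nonneg t ht) (hq_pos t)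
        (hw_sum t ht) (hq_sum t)
      simpa [klDiv, hK, klDiv] using this
    have habs_nonneg : 0 ≤ ∑ i, |w t i - expWeights n m α t i| :=
      Finset.sum_nonneg (fun i _ => abs_nonneg _)
    have hpin' : ∑ i, |w t i - expWeights n m α t i| ≤ Real.sqrt (2 * K) :=
      (Real.le_sqrt habs_nonneg (by nlinarith)).2 hpin
    have hsqrt2 : Real.sqrt (2 * K) = 2 * Real.sqrt (K / 2) := by
      have hs4 : Real.sqrt 4 = 2 := by
        rw [show (4:ℝ) = 2^2 by norm_num]; exact Real.sqrt_sq (by norm_num)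
      rw [show 2 * K = 4 * (K / 2) by ring, Real.sqrt_mul (by norm_num : (0:ℝ) ≤ 4), hs4]
    have hdiff : ∑ i, w t i * m t i - ∑ i, expWeights n m α t i * m t i
        ≤ ∑ i, |w t i - expWeights n m α t i| := by
      rw [← Finset.sum_sub_distrib]
      apply Finset.sum_le_sum
      intro i _
      have hm : |m t i| = 1 := by rcases hmargin t ht i with h | h <;> rw [h] <;> norm_num
      calc w t i * m t i - expWeights n m α t i * m t i
          = (w t i - expWeights n m α t i) * m t i := by ring
        _ ≤ |(w t i - expWeights n m α t i) * m t i| := le_abs_self _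
        _ = |w t i - expWeights n m α t i| := by rw [abs_mul, hm, mul_one]
    have hγwt := hγw t ht
    have hδt := hδ t ht
    have hqmt := hqm t ht
    rw [hγwt, hδt, ← hK]
    have : (1/2 : ℝ) * ∑ i, w t i * m t i - (1/2) * (1 - 2 * ε t) ≤ Real.sqrt (K / 2) := by
      rw [← hqmt]
      calc (1/2 : ℝ) * ∑ i, w t i * m t i - (1/2) * ∑ i, expWeights n m α t i * m t i
          = (1/2) * (∑ i, w t i * m t i - ∑ i, expWeights n m α t i * m t i) := by ring
        _ ≤ (1/2) * ∑ i, |w t i - expWeights n m α t i| := by linarith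
        _ ≤ (1/2) * Real.sqrt (2 * K) := by linarith
        _ = Real.sqrt (K / 2) := by rw [hsqrt2]; ring
    linarith
  -- expLoss recursion and product formula
  have key : ∀ t, t ≤ T →
      expLoss n m α t = n * ∏ s ∈ Finset.Icc 1 t, (2 * Real.sqrt (ε s * (1 - ε s))) := by
    intro t
    induction t with
    | zero =>
      intro _
      simp [expLoss, cumScore]
    | succ k ih =>
      intro hkT
      have hk : k ≤ T := Nat.le_of_succ_le hkT
      have hmem : k + 1 ∈ Finset.Icc 1 T := Finset.mem_Icc.2 ⟨Nat.succ_le_succ (Nat.zero_le k), hkT⟩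
      have hε0 := hε_pos _ hmem
      have hε1 := hε_lt _ hmem
      have hr : 0 < (1 - ε (k+1)) / ε (k+1) := div_pos (by linarith) hε0
      -- cumScore recursion
      have hcs : ∀ i, cumScore n m α (k+1) i = cumScore n m α k i + α (k+1) * m (k+1) i := by
        intro i
        rw [cumScore, Finset.sum_Icc_succ_top (Nat.succ_le_succ (Nat.zero_le k))]
        rfl
      -- A = ε(k+1) * L_k
      have hA : (∑ i, if m (k+1) i = -1 then Real.exp (-(cumScore n m α k i)) else 0)
          = ε (k+1) * expLoss n m α k := by
        have := hε _ hmem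
        rw [this]
        rw [Finset.sum_mul]
        apply Finset.sum_congr rfl
        intro i _
        by_cases h : m (k+1) i = -1
        · rw [if_pos h, if_pos h]
          simp only [expWeights, Nat.add_sub_cancel]
          rw [div_mul_cancel₀ _ (ne_of_gt (hL_pos k))]
        · rw [if_neg h, if_neg h, zero_mul]
      -- split expLoss
      have hsplit : expLoss n m α (k+1)
          = Real.exp (α (k+1)) * (∑ i, if m (k+1) i = -1 then Real.exp (-(cumScore n m α k i)) else 0)
            + Real.exp (-(α (k+1))) * (∑ i, if m (k+1) i = -1 then 0 else Real.exp (-(cumScore n m α k i))) := by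
        rw [expLoss, Finset.mul_sum, Finset.mul_sum, ← Finset.sum_add_distrib]
        apply Finset.sum_congr rfl
        intro i _
        rw [hcs i]
        rcases hmargin _ hmem i with h | h <;> rw [h] <;>
          norm_num [← Real.exp_add] <;> (try (congr 1; ring))
      have hB : (∑ i, if m (k+1) i = -1 then (0:ℝ) else Real.exp (-(cumScore n m α k i)))
          = (1 - ε (k+1)) * expLoss n m α k := by
        have hre : ∀ i, (if m (k+1) i = -1 then (0:ℝ) else Real.exp (-(cumScore n m α k i)))
            = Real.exp (-(cumScore n m α k i))
              - (if m (k+1) i = -1 then Real.exp (-(cumScore n m α k i)) else 0) := by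
          intro i; by_cases h : m (k+1) i = -1 <;> simp [h]
        rw [Finset.sum_congr rfl (fun i _ => hre i), Finset.sum_sub_distrib, hA,
          show (∑ i, Real.exp (-(cumScore n m α k i))) = expLoss n m α k from rfl]
        ring
      have hexpa : Real.exp (α (k+1)) = Real.sqrt ((1 - ε (k+1)) / ε (k+1)) := by
        rw [hα _ hmem]; exact exp_half_log hr
      have hexpa' : Real.exp (-(α (k+1))) = Real.sqrt (ε (k+1) / (1 - ε (k+1))) := by
        rw [hα _ hmem,
          show -((1/2:ℝ) * Real.log ((1 - ε (k+1)) / ε (k+1)))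
            = (1/2) * Real.log (ε (k+1) / (1 - ε (k+1))) by
            rw [Real.log_div (by linarith) hε0.ne', Real.log_div hε0.ne' (by linarith)]; ring]
        exact exp_half_log (div_pos hε0 (by linarith))
      have hcomb : ε (k+1) * Real.sqrt ((1 - ε (k+1)) / ε (k+1))
          + (1 - ε (k+1)) * Real.sqrt (ε (k+1) / (1 - ε (k+1)))
          = 2 * Real.sqrt (ε (k+1) * (1 - ε (k+1))) := by
        have hse : Real.sqrt (ε (k+1)) * Real.sqrt (ε (k+1)) = ε (k+1) :=
          Real.mul_self_sqrt hε0.le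
        have hs1 : Real.sqrt (1 - ε (k+1)) * Real.sqrt (1 - ε (k+1)) = 1 - ε (k+1) :=
          Real.mul_self_sqrt (by linarith)
        rw [Real.sqrt_div (by linarith : (0:ℝ) ≤ 1 - ε (k+1)) (ε (k+1)),
          Real.sqrt_div hε0.le (1 - ε (k+1)), Real.sqrt_mul hε0.le]
        have hne1 : Real.sqrt (ε (k+1)) ≠ 0 := by positivity
        have hne2 : Real.sqrt (1 - ε (k+1)) ≠ 0 := by
          have : 0 < 1 - ε (k+1) := by linarith
          positivity
        field_simp
        nlinarith [hse, hs1]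
      rw [hsplit, hA, hB, hexpa, hexpa', ih hk,
        Finset.prod_Icc_succ_top (Nat.succ_le_succ (Nat.zero_le k))]
      rw [← hcomb]
      ring
  -- indicator bound
  have hind : ∑ i, (if cumScore n m α T i ≤ 0 then (1:ℝ) else 0) ≤ expLoss n m α T := by
    rw [expLoss]
    apply Finset.sum_le_sum
    intro i _
    by_cases h : cumScore n m α T i ≤ 0
    · rw [if_pos h]
      exact Real.one_le_exp (by linarith)
    · rw [if_neg h]
      positivity
  have hprod : ∏ t ∈ Finset.Icc 1 T, (2 * Real.sqrt (ε t * (1 - ε t)))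
      ≤ ∏ t ∈ Finset.Icc 1 T, Real.exp (-2 * (γw t - δ t)^2) := by
    apply Finset.prod_le_prod
    · intro t _; positivity
    · intro t ht
      exact round_factor (hε_pos t ht) (hε_lt t ht)
        (by have := hedge t ht; linarith) (hγq t ht)
  calc (1 / n : ℝ) * ∑ i, (if cumScore n m α T i ≤ 0 then (1 : ℝ) else 0)
      ≤ (1 / n : ℝ) * expLoss n m α T := by
        apply mul_le_mul_of_nonneg_left hind (by positivity)
    _ = ∏ t ∈ Finset.Icc 1 T, (2 * Real.sqrt (ε t * (1 - ε t))) := by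
        rw [key T le_rfl]; field_simp
    _ ≤ ∏ t ∈ Finset.Icc 1 T, Real.exp (-2 * (γw t - δ t)^2) := hprod
    _ = Real.exp (-2 * ∑ t ∈ Finset.Icc 1 T, (γw t - δ t) ^ 2) := by
        rw [← Real.exp_sum]
        congr 1
        rw [Finset.mul_sum]
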